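/- Let V̄_P ∈ ℝ^{n×(n−m)} be any matrix whose columns span the orthogonal complement of Im(V_P). Then the condition V̄_Pᵀ Ā V_P = 0 holds if and only if for every pair of distinct clusters z ≠ ℓ and every i,j ∈ P_z, Σ_{k∈P_ℓ}(a_{ik} − a_{jk}) = 0. -/

import Mathlib

open Finset Matrix
open scoped RealInnerProductSpace

theorem matrix_condition_for_synchronization
    (n m : ℕ) (A : Matrix (Fin n) (Fin n) ℝ)
    (cl : Fin n → Fin m)
    (V : Matrix (Fin n) (Fin m) ℝ)
    (hV : ∀ i z, V i z = if cl i = z then (1 : ℝ) else 0)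
    (Abar : Matrix (Fin n) (Fin n) ℝ)
    (hAbar : Abar = A - A.hadamard (V * Vᵀ))
    (Vbar : Matrix (Fin n) (Fin (n - m)) ℝ)
    (hVbar : Submodule.span ℝ
        (Set.range fun w : Fin (n - m) => ((WithLp.equiv 2 (Fin n → ℝ)).symm fun i => Vbar i w)) =
      (Submodule.span ℝ
        (Set.range fun z : Fin m => ((WithLp.equiv 2 (Fin n → ℝ)).symm fun i => V i z)))ᗮ) :
    Vbarᵀ * Abar * V = 0 ↔
      ∀ z ℓ : Fin m, z ≠ ℓ → ∀ i j : Fin n, cl i = z → cl j = z →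
        ∑ k ∈ univ.filter (fun k => cl k = ℓ), (A i k - A j k) = 0 := by
  classical
  set v : Fin m → EuclideanSpace ℝ (Fin n) :=
    fun z => (WithLp.equiv 2 (Fin n → ℝ)).symm fun i => V i z with hv
  set vb : Fin (n - m) → EuclideanSpace ℝ (Fin n) :=
    fun w => (WithLp.equiv 2 (Fin n → ℝ)).symm fun i => Vbar i w with hvb
  set K : Submodule ℝ (EuclideanSpace ℝ (Fin n)) := Submodule.span ℝ (Set.range v) with hK
  -- entries of Abar
  have hAbar' : ∀ i k, Abar i k = if cl i = cl k then 0 else A i k := by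
    intro i k
    subst hAbar
    have : (V * Vᵀ) i k = if cl i = cl k then (1:ℝ) else 0 := by
      simp only [Matrix.mul_apply, Matrix.transpose_apply, hV]
      rw [Finset.sum_eq_single (cl i)]
      · by_cases h : cl i = cl k <;> simp [h, eq_comm]
      · intro b _ hb; simp [Ne.symm hb]
      · simp
    simp only [Matrix.sub_apply, Matrix.hadamard_apply, this]
    by_cases h : cl i = cl k <;> simp [h]
  -- entries of Abar * V
  have hAV : ∀ i ℓ, (Abar * V) i ℓ =
      if cl i = ℓ then 0 else ∑ k ∈ univ.filter (fun k => cl k = ℓ), A i k := by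
    intro i ℓ
    have hterm : ∀ k, Abar i k * V k ℓ =
        if cl k = ℓ then (if cl i = ℓ then 0 else A i k) else 0 := by
      intro k
      rw [hAbar', hV]
      by_cases h : cl k = ℓ
      · rw [if_pos h, mul_one, if_pos h, h]
      · simp [h]
    rw [Matrix.mul_apply]
    simp only [hterm]
    rw [← Finset.sum_filter]
    by_cases h : cl i = ℓ
    · simp [h]
    · simp [h]
  -- membership in K iff constant on clusters
  have hmemK : ∀ x : EuclideanSpace ℝ (Fin n),
      x ∈ K ↔ ∀ i j, cl i = cl j → x i = x j := by
    intro x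
    constructor
    · intro hx
      induction hx using Submodule.span_induction with
      | mem u hu =>
        obtain ⟨z, rfl⟩ := hu
        intro i j hij
        show V i z = V j z
        rw [hV, hV, hij]
      | zero => intro i j _; rfl
      | add a b _ _ ha hb => intro i j hij; show a i + b i = a j + b j; rw [ha i j hij, hb i j hij]
      | smul r a _ ha => intro i j hij; show r * a i = r * a j; rw [ha i j hij]
    · intro hx
      have hxe : x = ∑ z : Fin m,
          (if h : ∃ i, cl i = z then x h.choose else 0) • v z := by
        ext i
        rw [WithLp.ofLp_sum, Finset.sum_apply]
        rw [Finset.sum_eq_single (cl i)]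
        · have h : ∃ i', cl i' = cl i := ⟨i, rfl⟩
          rw [dif_pos h]
          show x i = x h.choose * V i (cl i)
          rw [hV, if_pos rfl, mul_one]
          exact (hx _ _ h.choose_spec).symm
        · intro b _ hb
          show (if h : ∃ i', cl i' = b then x h.choose else 0) * V i b = 0
          rw [hV, if_neg (Ne.symm hb), mul_zero]
        · simp
      rw [hxe]
      exact Submodule.sum_mem _ fun z _ =>
        Submodule.smul_mem _ _ (Submodule.subset_span ⟨z, rfl⟩)
  -- columns of Abar * V
  set c : Fin m → EuclideanSpace ℝ (Fin n) :=
    fun ℓ => (WithLp.equiv 2 (Fin n → ℝ)).symm fun i => (Abar * V) i ℓ with hc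
  have hKbb : (Submodule.span ℝ (Set.range vb))ᗮ = K := by
    rw [hVbar, Submodule.orthogonal_orthogonal]
  -- zero matrix iff columns in K
  have hzero : Vbarᵀ * Abar * V = 0 ↔ ∀ ℓ, c ℓ ∈ K := by
    constructor
    · intro h0 ℓ
      rw [← hKbb, Submodule.mem_orthogonal]
      intro u hu
      induction hu using Submodule.span_induction with
      | mem u hu =>
        obtain ⟨w, rfl⟩ := hu
        have h1 := congrFun (congrFun h0 w) ℓ
        rw [Matrix.mul_assoc, Matrix.mul_apply] at h1
        simp only [Matrix.zero_apply, Matrix.transpose_apply] at h1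
        rw [PiLp.inner_apply]
        simp only [RCLike.inner_apply, starRingEnd_apply, star_trivial]
        exact (Finset.sum_congr rfl fun x _ => mul_comm _ _).trans h1
      | zero => simp
      | add a b _ _ ha hb => rw [inner_add_left, ha, hb, add_zero]
      | smul r a _ ha => rw [inner_smul_left, ha, mul_zero]
    · intro h
      funext w ℓ
      rw [Matrix.mul_assoc, Matrix.mul_apply]
      have hin : ⟪vb w, c ℓ⟫ = 0 :=
        (Submodule.mem_orthogonal _ _).1 (hKbb ▸ h ℓ) _ (Submodule.subset_span (Set.mem_range_self w))
      rw [PiLp.inner_apply] at hin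
      simp only [RCLike.inner_apply, starRingEnd_apply, star_trivial] at hin
      simp only [Matrix.zero_apply, Matrix.transpose_apply]
      exact (Finset.sum_congr rfl fun x _ => mul_comm _ _).trans hin
  rw [hzero]
  constructor
  · intro h z ℓ hzℓ i j hi hj
    have h1 : (Abar * V) i ℓ = (Abar * V) j ℓ :=
      (hmemK (c ℓ)).1 (h ℓ) i j (hi.trans hj.symm)
    rw [hAV, hAV, if_neg (fun e => hzℓ (hi ▸ e)), if_neg (fun e => hzℓ (hj ▸ e))] at h1
    rw [Finset.sum_sub_distrib, sub_eq_zero]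
    exact h1
  · intro h ℓ
    rw [hmemK]
    intro i j hij
    show (Abar * V) i ℓ = (Abar * V) j ℓ
    rw [hAV, hAV, hij]
    by_cases hz : cl j = ℓ
    · simp [hz]
    · rw [if_neg hz, if_neg hz]
      have h2 := h (cl j) ℓ hz i j hij rfl
      rw [Finset.sum_sub_distrib, sub_eq_zero] at h2
      exact h2
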